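/- Let Z be the 3×3 quaternion skew-symmetric matrix with Z₁₂ = 1, Z₁₃ = c, Z₂₃ = b (skew-symmetric completion), where b̄·c̄ = c̄·b̄. Then W = Z·Z* has 0 as a right eigenvalue and 1 + |b|² + |c|² as a real right eigenvalue of multiplicity two. -/

import Mathlib

open scoped Quaternion
set_option maxHeartbeats 1000000

/-- For `Z = !![0, 1, c; -1, 0, b; -c, -b, 0]` with `b̄·c̄ = c̄·b̄`, the matrix
`W = Z·Z*` has `0` as a right eigenvalue and `1 + |b|² + |c|²` as a real right
eigenvalue of multiplicity two (witnessed by two orthogonal eigenvectors). -/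
theorem three_by_three_skewSymm_commuting_eigenvalues (b c : ℍ[ℝ])
    (h : star b * star c = star c * star b) :
    ∃ W : Matrix (Fin 3) (Fin 3) ℍ[ℝ],
      W = (!![0, 1, c; -1, 0, b; -c, -b, 0] : Matrix (Fin 3) (Fin 3) ℍ[ℝ]) *
          (!![0, 1, c; -1, 0, b; -c, -b, 0]).conjTranspose ∧
      (∃ x : Fin 3 → ℍ[ℝ], x ≠ 0 ∧ W.mulVec x = 0) ∧
      (∃ u v : Fin 3 → ℍ[ℝ], u ≠ 0 ∧ v ≠ 0 ∧ dotProduct (star u) v = 0 ∧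
        W.mulVec u = (1 + Quaternion.normSq b + Quaternion.normSq c : ℝ) • u ∧
        W.mulVec v = (1 + Quaternion.normSq b + Quaternion.normSq c : ℝ) • v) := by
  have hbc : b * c = c * b := by
    have := congrArg star h
    simpa [star_mul] using this.symm
  have hbsc : b * star c = star c * b := by
    rw [Quaternion.star_eq_two_re_sub c, mul_sub, sub_mul, hbc, Quaternion.coe_commutes]
  have hsbc : star b * c = c * star b := by
    rw [Quaternion.star_eq_two_re_sub b, mul_sub, sub_mul, hbc, Quaternion.coe_commutes]
  have hcoe : ∀ r : ℝ, ((r : ℝ) : ℍ[ℝ]) = r • (1 : ℍ[ℝ]) := fun r => by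
    rw [← Quaternion.coe_mul_eq_smul, mul_one]
  have k1 : star c * b * c = Quaternion.normSq c • b := by
    rw [mul_assoc, hbc, ← mul_assoc, Quaternion.star_mul_self, Quaternion.coe_mul_eq_smul]
  have k2 : b * c * star b = Quaternion.normSq b • c := by
    rw [hbc, mul_assoc, Quaternion.self_mul_star, Quaternion.mul_coe_eq_smul]
  refine ⟨_, rfl, ⟨![star b, -star c, 1], ?_, ?_⟩,
    ![1, 0, -b], ![star b * c, ((1 + Quaternion.normSq b : ℝ) : ℍ[ℝ]), c], ?_, ?_, ?_, ?_, ?_⟩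
  · intro hx
    have := congrFun hx 2
    simp at this
  · rw [← Matrix.mulVec_mulVec]
    have hz : ((!![0, 1, c; -1, 0, b; -c, -b, 0] :
        Matrix (Fin 3) (Fin 3) ℍ[ℝ]).conjTranspose).mulVec ![star b, -star c, 1] = 0 := by
      funext i
      fin_cases i <;>
        simp [Matrix.mulVec, dotProduct, Fin.sum_univ_three,
          Matrix.conjTranspose_apply, h]
    rw [hz, Matrix.mulVec_zero]
  · intro hu
    have := congrFun hu 0
    simp at this
  · intro hv
    have h2 := congrFun hv 1
    simp only [Matrix.cons_val_one, Matrix.head_cons, Pi.zero_apply] at h2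
    have h3 : (1 + Quaternion.normSq b : ℝ) = 0 := Quaternion.coe_injective (by simpa using h2)
    nlinarith [Quaternion.normSq_nonneg (a := b)]
  · simp [dotProduct, Fin.sum_univ_three, Pi.star_apply]
  · funext i
    fin_cases i <;>
      simp [Matrix.mulVec, dotProduct, Matrix.mul_apply, Fin.sum_univ_three,
        Matrix.conjTranspose_apply, Quaternion.self_mul_star, Quaternion.star_mul_self,
        hbsc, hsbc, h, k1, k2, mul_sub, sub_mul, mul_add, add_mul, ← mul_assoc,
        Quaternion.coe_mul_eq_smul, Quaternion.mul_coe_eq_smul, smul_smul, mul_smul_comm,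
        smul_mul_assoc, hcoe] <;> module
  · funext i
    fin_cases i <;>
      simp [Matrix.mulVec, dotProduct, Matrix.mul_apply, Fin.sum_univ_three,
        Matrix.conjTranspose_apply, Quaternion.self_mul_star, Quaternion.star_mul_self,
        hbsc, hsbc, h, k1, k2, mul_sub, sub_mul, mul_add, add_mul, ← mul_assoc,
        Quaternion.coe_mul_eq_smul, Quaternion.mul_coe_eq_smul, smul_smul, mul_smul_comm,
        smul_mul_assoc, hcoe] <;> module
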